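/- The 2-dimensional algebra E_2 with basis e_1, e_2 and nonzero products e_1e_1=-e_1, e_1e_2=-3e_2, e_2e_1=3e_2 satisfies both standard degree-3 identities st^3_1 and st^3_2 (i.e. Σ_{σ∈S_3} sgn(σ)(x_{σ(1)}x_{σ(2)})x_{σ(3)}=0 and Σ_{σ∈S_3} sgn(σ) x_{σ(3)}(x_{σ(2)}x_{σ(1)})=0), is terminal, but is neither a left Leibniz algebra nor a Jordan algebra. -/
import Mathlib


def tbl (F : Type*) [Field F] : Fin 2 → Fin 2 → Fin 2 → F :=
  ![![![-1, 0], ![0, -3]], ![![0, 3], ![0, 0]]]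

def mul (F : Type*) [Field F] (x y : Fin 2 → F) : Fin 2 → F :=
  fun k => ∑ i, ∑ j, x i * y j * tbl F i j k

def termF (F : Type*) [Field F] (a b : Fin 2 → F) : Fin 2 → F :=
  (3 : F)⁻¹ • ((2 : F) • mul F a b + mul F b a)

lemma perm3 : (Finset.univ : Finset (Equiv.Perm (Fin 3))) =
    {1, Equiv.swap 0 1, Equiv.swap 0 2, Equiv.swap 1 2,
     Equiv.swap 0 1 * Equiv.swap 1 2, Equiv.swap 1 2 * Equiv.swap 0 1} := by decide

lemma mul0 (F : Type*) [Field F] (x y : Fin 2 → F) : mul F x y 0 = -(x 0 * y 0) := by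
  simp [mul, tbl, Fin.sum_univ_succ]

lemma mul1 (F : Type*) [Field F] (x y : Fin 2 → F) :
    mul F x y 1 = 3 * x 1 * y 0 - 3 * x 0 * y 1 := by
  simp [mul, tbl, Fin.sum_univ_succ]; ring

/-- `E₂` satisfies `st³₁` and `st³₂`, is terminal, but is neither left Leibniz nor Jordan. -/
theorem E2_properties (F : Type*) [Field F] [CharZero F] :
    (∀ x : Fin 3 → (Fin 2 → F),
      ∑ σ : Equiv.Perm (Fin 3), (Equiv.Perm.sign σ : ℤ) •
        mul F (mul F (x (σ 0)) (x (σ 1))) (x (σ 2)) = 0) ∧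
    (∀ x : Fin 3 → (Fin 2 → F),
      ∑ σ : Equiv.Perm (Fin 3), (Equiv.Perm.sign σ : ℤ) •
        mul F (x (σ 2)) (mul F (x (σ 1)) (x (σ 0))) = 0) ∧
    (∀ a b x y : Fin 2 → F,
      mul F b (mul F a (mul F x y) - mul F (mul F a x) y - mul F x (mul F a y)) - mul F a (mul F (mul F b x) y) + mul F (mul F a (mul F b x)) y + mul F (mul F b x) (mul F a y) - mul F a (mul F x (mul F b y)) + mul F (mul F a x) (mul F b y) + mul F x (mul F a (mul F b y))
        = - mul F (termF F a b) (mul F x y) + mul F (mul F (termF F a b) x) y + mul F x (mul F (termF F a b) y)) ∧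
    ¬ (∀ x y z : Fin 2 → F, mul F x (mul F y z) = mul F (mul F x y) z + mul F y (mul F x z)) ∧
    ¬ ((∀ x y : Fin 2 → F, mul F x y = mul F y x) ∧
        ∀ x y : Fin 2 → F, mul F (mul F (mul F x x) y) x = mul F (mul F x x) (mul F y x)) := by
  refine ⟨?_, ?_, ?_, ?_, ?_⟩
  · intro x
    rw [perm3, Finset.sum_insert (by decide), Finset.sum_insert (by decide),
      Finset.sum_insert (by decide), Finset.sum_insert (by decide),
      Finset.sum_insert (by decide), Finset.sum_singleton]
    funext k
    fin_cases k <;>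
    · simp only [Fin.zero_eta, Fin.mk_one, Pi.add_apply, Pi.zero_apply, Pi.smul_apply,
        zsmul_eq_mul, mul0, mul1, Equiv.Perm.one_apply, Equiv.Perm.mul_apply,
        Equiv.swap_apply_def]
      simp
      simp only [mul0, mul1]
      ring
  · intro x
    rw [perm3, Finset.sum_insert (by decide), Finset.sum_insert (by decide),
      Finset.sum_insert (by decide), Finset.sum_insert (by decide),
      Finset.sum_insert (by decide), Finset.sum_singleton]
    funext k
    fin_cases k <;>
    · simp only [Fin.zero_eta, Fin.mk_one, Pi.add_apply, Pi.zero_apply, Pi.smul_apply,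
        zsmul_eq_mul, mul0, mul1, Equiv.Perm.one_apply, Equiv.Perm.mul_apply,
        Equiv.swap_apply_def]
      simp
      simp only [mul0, mul1]
      ring
  · intro a b x y
    funext k
    fin_cases k <;>
    · simp only [Fin.zero_eta, Fin.mk_one, termF, Fin.isValue, Pi.sub_apply, Pi.add_apply,
        Pi.neg_apply, Pi.smul_apply, smul_eq_mul, mul0, mul1]
      field_simp
      ring
  · intro h
    have := congrFun (h ![1,0] ![1,0] ![0,1]) 1
    simp only [mul0, mul1, Pi.add_apply] at this
    norm_num at this
  · rintro ⟨h, -⟩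
    have := congrFun (h ![1,0] ![0,1]) 1
    simp only [mul1] at this
    norm_num at this
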